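/- Let A ∈ ℂ^{n×n} satisfy A* H = ε₂ H A with H invertible and ε₂ ∈ {1,−1}, and let (X₁, Λ₁), (X₂, Λ₂) be invariant pairs of A. If the spectra of ε₂ Λ₁* and Λ₂ are disjoint, then X₁* H X₂ = 0. -/

import Mathlib

open Matrix Polynomial

/-- Evaluating the characteristic polynomial gives the determinant of `k • 1 - M`. -/
lemma aux_eval_charpoly {p : ℕ} (M : Matrix (Fin p) (Fin p) ℂ) (k : ℂ) :
    M.charpoly.eval k = (algebraMap ℂ (Matrix (Fin p) (Fin p) ℂ) k - M).det := by
  rw [Matrix.charpoly, _root_.eval_det]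
  congr 1
  rw [matPolyEquiv_charmatrix]
  ext i j
  simp [Matrix.algebraMap_eq_diagonal, Matrix.sub_apply, Matrix.diagonal_apply,
    Polynomial.eval_sub, Matrix.scalar_apply]

lemma aux_mem_spectrum_of_isRoot {p : ℕ} (M : Matrix (Fin p) (Fin p) ℂ) (k : ℂ)
    (h : M.charpoly.IsRoot k) : k ∈ spectrum ℂ M := by
  rw [spectrum.mem_iff]
  intro hu
  rw [Matrix.isUnit_iff_isUnit_det, isUnit_iff_ne_zero] at hu
  exact hu (by rw [← aux_eval_charpoly]; exact h)

lemma aux_intertwine {p q : ℕ} (B : Matrix (Fin p) (Fin p) ℂ)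
    (M : Matrix (Fin p) (Fin q) ℂ) (C : Matrix (Fin q) (Fin q) ℂ)
    (h : B * M = M * C) (f : Polynomial ℂ) :
    (aeval B f) * M = M * (aeval C f) := by
  have hpow : ∀ m : ℕ, B ^ m * M = M * C ^ m := by
    intro m
    induction m with
    | zero => simp
    | succ m ih =>
        rw [pow_succ, pow_succ, Matrix.mul_assoc, h, ← Matrix.mul_assoc, ih, Matrix.mul_assoc]
  induction f using Polynomial.induction_on' with
  | add f g hf hg => rw [map_add, map_add, Matrix.add_mul, Matrix.mul_add, hf, hg]
  | monomial m a =>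
      simp only [aeval_monomial, Algebra.algebraMap_eq_smul_one, smul_mul_assoc, one_mul,
        Matrix.smul_mul, Matrix.mul_smul, hpow m]

/-- Sylvester uniqueness: if the spectra of `B` and `C` are disjoint and `B M = M C`,
then `M = 0`. -/
lemma aux_sylvester {p q : ℕ} (B : Matrix (Fin p) (Fin p) ℂ)
    (M : Matrix (Fin p) (Fin q) ℂ) (C : Matrix (Fin q) (Fin q) ℂ)
    (h : B * M = M * C) (hdisj : spectrum ℂ B ∩ spectrum ℂ C = ∅) : M = 0 := by
  rcases Nat.eq_zero_or_pos p with hp | hp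
  · subst hp; ext i j; exact i.elim0
  have : NeZero p := ⟨hp.ne'⟩
  have hne : (spectrum ℂ B).Nonempty :=
    spectrum.nonempty_of_isAlgClosed_of_finiteDimensional ℂ B
  set f := C.charpoly with hf
  have hCH : aeval C f = 0 := Matrix.aeval_self_charpoly C
  have key : (aeval B f) * M = 0 := by
    rw [aux_intertwine B M C h f, hCH, Matrix.mul_zero]
  have hunit : IsUnit (aeval B f) := by
    rw [← spectrum.zero_notMem_iff ℂ,
      spectrum.map_polynomial_aeval_of_nonempty B f hne]
    rintro ⟨k, hk, hk0⟩
    have : k ∈ spectrum ℂ C := aux_mem_spectrum_of_isRoot C k hk0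
    have : k ∈ spectrum ℂ B ∩ spectrum ℂ C := ⟨hk, this⟩
    rw [hdisj] at this
    exact this
  obtain ⟨u, hu⟩ := hunit
  have hM : M = (↑u⁻¹ : Matrix (Fin p) (Fin p) ℂ) * ((↑u : Matrix (Fin p) (Fin p) ℂ) * M) := by
    rw [← Matrix.mul_assoc, u.inv_mul, Matrix.one_mul]
  rw [hM, hu, key, Matrix.mul_zero]

/-- If the spectra of `ε₂ Λ₁ᴴ` and `Λ₂` are disjoint, then the invariant-pair Gram block
`X₁ᴴ H X₂` vanishes, for `A` structured with respect to `H` (`Aᴴ H = ε₂ • H A`). -/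
theorem stmt5 {n p₁ p₂ : ℕ}
    (A H : Matrix (Fin n) (Fin n) ℂ) (hH : IsUnit H)
    (e2 : ℂ) (he2 : e2 = 1 ∨ e2 = -1)
    (hA : Aᴴ * H = e2 • (H * A))
    (X₁ : Matrix (Fin n) (Fin p₁) ℂ) (Lam₁ : Matrix (Fin p₁) (Fin p₁) ℂ)
    (X₂ : Matrix (Fin n) (Fin p₂) ℂ) (Lam₂ : Matrix (Fin p₂) (Fin p₂) ℂ)
    (h₁ : A * X₁ = X₁ * Lam₁) (h₂ : A * X₂ = X₂ * Lam₂)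
    (hdisj : spectrum ℂ (e2 • Lam₁ᴴ) ∩ spectrum ℂ Lam₂ = ∅) :
    X₁ᴴ * H * X₂ = 0 := by
  have he2sq : e2 * e2 = 1 := by rcases he2 with h | h <;> simp [h]
  set M := X₁ᴴ * H * X₂ with hM
  have hstep : Lam₁ᴴ * M = e2 • (M * Lam₂) := by
    have hX : Lam₁ᴴ * X₁ᴴ = X₁ᴴ * Aᴴ := by
      rw [← Matrix.conjTranspose_mul, ← h₁, Matrix.conjTranspose_mul]
    calc Lam₁ᴴ * (X₁ᴴ * H * X₂) = (Lam₁ᴴ * X₁ᴴ) * H * X₂ := by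
          simp only [Matrix.mul_assoc]
      _ = X₁ᴴ * Aᴴ * H * X₂ := by rw [hX]
      _ = X₁ᴴ * (Aᴴ * H) * X₂ := by simp only [Matrix.mul_assoc]
      _ = X₁ᴴ * (e2 • (H * A)) * X₂ := by rw [hA]
      _ = e2 • (X₁ᴴ * (H * (A * X₂))) := by
          rw [Matrix.mul_smul, Matrix.smul_mul]; simp only [Matrix.mul_assoc]
      _ = e2 • (X₁ᴴ * (H * (X₂ * Lam₂))) := by rw [h₂]
      _ = e2 • (X₁ᴴ * H * X₂ * Lam₂) := by simp only [Matrix.mul_assoc]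
  have hsyl : (e2 • Lam₁ᴴ) * M = M * Lam₂ := by
    rw [Matrix.smul_mul, hstep, smul_smul, he2sq, one_smul]
  exact aux_sylvester (e2 • Lam₁ᴴ) M Lam₂ hsyl hdisj
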